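/- Let G be a connected graph with n ≥ 2 vertices, let d(G) := ∏_{v ∈ V(G)} d_G(v), and let 𝒟 be a uniformly random 1-out-directed graph in G (i.e., obtained by independently choosing for each vertex a uniformly random neighbour as its unique out-neighbour). Then for every spanning tree T of G, ℙ(U(𝒟) = T) = (n-1)/d(G). In particular, conditioned on the event that U(𝒟) is a tree, U(𝒟) is a uniformly random spanning tree of G. -/

import Mathlib

set_option linter.unusedSectionVars false
set_option maxHeartbeats 1000000
open SimpleGraph
namespace OneOut
variable {V : Type} [DecidableEq V] {T : SimpleGraph V}

-- paste of a.lean/b.lean omitted: assume available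




/-- Walk along iterates of `f`. -/
def iterWalk (T : SimpleGraph V) (f : V → V) (hf : ∀ v, T.Adj v (f v)) :
    (k : ℕ) → (v : V) → T.Walk v (f^[k] v)
  | 0, _ => Walk.nil
  | (k+1), v =>
    (Walk.cons (hf v) (iterWalk T f hf k (f v))).copy rfl
      (Function.iterate_succ_apply f k v).symm

lemma iterWalk_support (f : V → V) (hf : ∀ v, T.Adj v (f v)) (k : ℕ) (v : V) :
    (iterWalk T f hf k v).support = (List.range (k+1)).map (fun i => f^[i] v) := by
  induction k generalizing v with
  | zero => simp [iterWalk]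
  | succ k ih =>
    rw [iterWalk, Walk.support_copy, Walk.support_cons, ih]
    rw [List.range_succ_eq_map (n := k+1), List.map_cons, List.map_map]
    simp [Function.comp_def, Function.iterate_succ_apply]

lemma iterWalk_length (f : V → V) (hf : ∀ v, T.Adj v (f v)) (k : ℕ) (v : V) :
    (iterWalk T f hf k v).length = k := by
  induction k generalizing v with
  | zero => rfl
  | succ k ih => rw [iterWalk, Walk.length_copy, Walk.length_cons, ih]

lemma iterWalk_getVert_one (f : V → V) (hf : ∀ v, T.Adj v (f v)) (k : ℕ) (v : V) :
    (iterWalk T f hf (k+1) v).getVert 1 = f v := by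
  rw [iterWalk, Walk.getVert_copy, Walk.getVert_cons_succ, Walk.getVert_zero]


lemma path_eq (hT : T.IsTree) {v w : V} {p q : T.Walk v w} (hp : p.IsPath) (hq : q.IsPath) :
    p = q := (hT.existsUnique_path v w).unique hp hq

/-- The chosen path from `v` to `a` in a tree. -/
noncomputable def thePath (hT : T.IsTree) (v a : V) : T.Walk v a :=
  (hT.existsUnique_path v a).exists.choose

lemma thePath_isPath (hT : T.IsTree) (v a : V) : (thePath hT v a).IsPath :=
  (hT.existsUnique_path v a).exists.choose_spec

/-- Second vertex of the unique path from `v` to `a`. -/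
noncomputable def treeSnd (hT : T.IsTree) (v a : V) : V := (thePath hT v a).getVert 1

lemma getVert_one_eq_treeSnd (hT : T.IsTree) {v a : V} (p : T.Walk v a) (hp : p.IsPath) :
    p.getVert 1 = treeSnd hT v a := by
  rw [treeSnd, path_eq hT hp (thePath_isPath hT v a)]

lemma treeSnd_adj (hT : T.IsTree) {v a : V} (h : v ≠ a) : T.Adj v (treeSnd hT v a) := by
  have := Walk.adj_snd (p := thePath hT v a) (Walk.not_nil_of_ne h)
  exact this

lemma treeSnd_of_adj (hT : T.IsTree) {x y : V} (h : T.Adj x y) : treeSnd hT x y = y := by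
  have hp : (Walk.cons h Walk.nil).IsPath := by
    simp [Walk.isPath_def, h.ne]
  rw [← getVert_one_eq_treeSnd hT _ hp]
  rfl

/-- For an edge `{u,w}` of a tree with `u w ≠ a`, either the path from `u` to `a`
starts with `w` or vice versa. -/
lemma treeSnd_edge (hT : T.IsTree) {u w a : V} (h : T.Adj u w) :
    treeSnd hT u a = w ∨ treeSnd hT w a = u := by
  by_cases hu : u ∈ (thePath hT w a).support
  · -- then w ∉ thePath u a, and we get the second alternative
    right
    have hq : ((thePath hT w a).dropUntil u hu).IsPath := (thePath_isPath hT w a).dropUntil hu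
    have hqe : (thePath hT w a).dropUntil u hu = thePath hT u a := path_eq hT hq (thePath_isPath hT u a)
    have hwn : w ∉ (thePath hT u a).support := by
      rw [← hqe]
      intro hw
      have hspec := (thePath hT w a).take_spec hu
      have hnodup : (((thePath hT w a).takeUntil u hu).support ++
          ((thePath hT w a).dropUntil u hu).support.tail).Nodup := by
        rw [← Walk.support_append, hspec]
        exact (thePath_isPath hT w a).support_nodup
      have hw1 : w ∈ ((thePath hT w a).takeUntil u hu).support := Walk.start_mem_support _
      have hw2 : w ∈ ((thePath hT w a).dropUntil u hu).support.tail := by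
        have := Walk.support_eq_cons ((thePath hT w a).dropUntil u hu)
        rw [this, List.mem_cons] at hw
        exact hw.resolve_left h.ne'
      rw [List.nodup_append] at hnodup
      exact hnodup.2.2 w hw1 w hw2 rfl
    have : (Walk.cons h.symm (thePath hT u a)).IsPath :=
      (Walk.cons_isPath_iff _ _).2 ⟨thePath_isPath hT u a, hwn⟩
    rw [← getVert_one_eq_treeSnd hT _ this]
    simp [Walk.getVert_cons_succ]
  · left
    have : (Walk.cons h (thePath hT w a)).IsPath :=
      (Walk.cons_isPath_iff _ _).2 ⟨thePath_isPath hT w a, hu⟩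
    rw [← getVert_one_eq_treeSnd hT _ this]
    simp [Walk.getVert_cons_succ]


section Dyn
variable {f : V → V} (hT : T.IsTree) (hf : ∀ v, T.Adj v (f v))

include hT hf in
/-- A minimal period of `f` must be 2. -/
lemma period_eq_two {x : V} {p : ℕ} (hp1 : 1 ≤ p) (hpx : f^[p] x = x)
    (hmin : ∀ q, 1 ≤ q → q < p → f^[q] x ≠ x) : p = 2 := by
  -- p ≠ 1
  have hne1 : p ≠ 1 := by
    rintro rfl
    exact (hf x).ne (by simpa using hpx.symm)
  by_contra hne2
  have hp3 : 3 ≤ p := by omega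
  -- distinctness of f^[s] x for 1 ≤ s ≤ p
  have hdist : ∀ s t, 1 ≤ s → s < t → t ≤ p → f^[s] x ≠ f^[t] x := by
    intro s t hs hst htp heq
    have : f^[s + (p - t)] x = x := by
      have : f^[p - t] (f^[s] x) = f^[p - t] (f^[t] x) := by rw [heq]
      rw [← Function.iterate_add_apply, ← Function.iterate_add_apply] at this
      have h2 : p - t + t = p := by omega
      rw [h2, hpx] at this
      rw [Nat.add_comm s (p - t)]
      exact this
    exact hmin (s + (p - t)) (by omega) (by omega) this
  -- inner walk from f x to x of length p - 1
  have hcast : f^[p-1] (f x) = x := by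
    have h : p - 1 + 1 = p := by omega
    calc f^[p-1] (f x) = f^[p-1+1] x := (Function.iterate_succ_apply f (p-1) x).symm
      _ = x := by rw [h, hpx]
  let w1 : T.Walk (f x) x := (iterWalk T f hf (p-1) (f x)).copy rfl hcast
  have hw1path : w1.IsPath := by
    rw [Walk.isPath_def]
    show ((iterWalk T f hf (p-1) (f x)).copy rfl hcast).support.Nodup
    rw [Walk.support_copy, iterWalk_support]
    refine List.Nodup.map_on ?_ List.nodup_range
    intro i hi j hj hij
    simp only [List.mem_range] at hi hj
    rw [← Function.iterate_succ_apply, ← Function.iterate_succ_apply] at hij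
    by_contra hne
    rcases Nat.lt_or_ge i j with h | h
    · exact hdist (i+1) (j+1) (by omega) (by omega) (by omega) hij
    · exact hdist (j+1) (i+1) (by omega) (by omega) (by omega) hij.symm
  -- the single edge walk
  have hw2path : (Walk.cons (hf x) (Walk.nil : T.Walk (f x) (f x))).IsPath := by
    simp [Walk.isPath_def, (hf x).ne]
  have := path_eq hT hw1path.reverse hw2path
  have hlen : w1.reverse.length = (Walk.cons (hf x) (Walk.nil : T.Walk (f x) (f x))).length := by
    rw [this]
  rw [Walk.length_reverse] at hlen
  have : w1.length = p - 1 := by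
    show ((iterWalk T f hf (p-1) (f x)).copy rfl hcast).length = p - 1
    rw [Walk.length_copy, iterWalk_length]
  rw [this] at hlen
  simp [Walk.length_cons] at hlen
  omega

include hT hf in
lemma exists_periodic [Finite V] (x : V) : ∃ y, (∃ k, f^[k] x = y) ∧ f (f y) = y := by
  obtain ⟨i, j, hne, hij⟩ := Finite.exists_ne_map_eq_of_infinite (fun n : ℕ => f^[n] x)
  wlog hlt : i < j generalizing i j
  · exact this j i hne.symm hij.symm (by omega)

  have hper : f^[j - i] (f^[i] x) = f^[i] x := by
    rw [← Function.iterate_add_apply]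
    have h : j - i + i = j := by omega
    rw [h, ← hij]
  have hex : ∃ q, 1 ≤ q ∧ f^[q] (f^[i] x) = f^[i] x := ⟨j - i, by omega, hper⟩
  classical
  have hp := Nat.find_spec hex
  have hmin : ∀ q, 1 ≤ q → q < Nat.find hex → f^[q] (f^[i] x) ≠ f^[i] x := by
    intro q h1 h2 hq
    exact Nat.find_min hex h2 ⟨h1, hq⟩
  have h2 : Nat.find hex = 2 := period_eq_two hT hf hp.1 hp.2 hmin
  refine ⟨f^[i] x, ⟨i, rfl⟩, ?_⟩
  have := hp.2
  rw [h2] at this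
  exact this

variable (hcov : ∀ u w, T.Adj u w → f u = w ∨ f w = u)

include hT hf hcov in
lemma unique_two_cycle [Fintype V] {x p : V} (hx : f (f x) = x) (hp : f (f p) = p) :
    s(x, f x) = s(p, f p) := by
  by_contra hne
  classical
  set σ : V → Sym2 V := fun v => s(v, f v) with hσ
  have himage : Finset.univ.image σ = T.edgeFinset := by
    apply Finset.ext
    intro e
    simp only [Finset.mem_image, Finset.mem_univ, true_and, mem_edgeFinset]
    constructor
    · rintro ⟨v, rfl⟩
      exact (hf v)
    · intro he
      induction e with
      | h u w =>
        rw [mem_edgeSet] at he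
        rcases hcov u w he with h | h
        · exact ⟨u, by rw [hσ]; simp [h]⟩
        · exact ⟨w, by rw [hσ]; simp [h, Sym2.eq_swap]⟩
  -- the image is also contained in the image of univ minus two points
  have hxne : x ≠ f x := (hf x).ne
  have hpne : p ≠ f p := (hf p).ne
  have hximage : Finset.univ.image σ = (Finset.univ \ {f x, f p}).image σ := by
    apply Finset.Subset.antisymm
    · intro e he
      simp only [Finset.mem_image, Finset.mem_univ, true_and] at he
      obtain ⟨v, rfl⟩ := he
      by_cases hv1 : v = f x
      · refine Finset.mem_image.2 ⟨x, ?_, ?_⟩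
        · simp only [Finset.mem_sdiff, Finset.mem_univ, true_and, Finset.mem_insert,
            Finset.mem_singleton]
          push_neg
          refine ⟨hxne, ?_⟩
          intro hxp
          apply hne
          have hfx : f x = p := by rw [hxp, hp]
          rw [hfx, hxp]
          exact Sym2.eq_swap
        · subst hv1
          simp only [hσ, hx]
          exact Sym2.eq_swap
      · by_cases hv2 : v = f p
        · refine Finset.mem_image.2 ⟨p, ?_, ?_⟩
          · simp only [Finset.mem_sdiff, Finset.mem_univ, true_and, Finset.mem_insert,
              Finset.mem_singleton]
            push_neg
            refine ⟨?_, hpne⟩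
            intro hpx
            apply hne
            rw [hpx, hx]
            exact Sym2.eq_swap
          · subst hv2
            simp only [hσ, hp]
            exact Sym2.eq_swap
        · exact Finset.mem_image.2 ⟨v, by simp [hv1, hv2], rfl⟩
    · intro e he
      obtain ⟨v, _, rfl⟩ := Finset.mem_image.1 he
      exact Finset.mem_image.2 ⟨v, Finset.mem_univ v, rfl⟩
  have hfxfp : f x ≠ f p := by
    intro h
    apply hne
    have hxp : x = p := by rw [← hx, h, hp]
    rw [hxp]
  have hcard2 : (Finset.univ \ ({f x, f p} : Finset V)).card = Fintype.card V - 2 := by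
    rw [Finset.card_sdiff_of_subset (Finset.subset_univ _), Finset.card_univ,
      Finset.card_insert_of_notMem (by simp [hfxfp]), Finset.card_singleton]
  have h1 : T.edgeFinset.card ≤ Fintype.card V - 2 := by
    rw [← himage, hximage]
    exact le_trans (Finset.card_image_le) (le_of_eq hcard2)
  have hT2 : T.edgeFinset.card + 1 = Fintype.card V := hT.card_edgeFinset
  have hVpos : 2 ≤ Fintype.card V := by
    have : x ∈ (Finset.univ : Finset V) := Finset.mem_univ x
    have hcard : ({x, f x} : Finset V).card = 2 := by
      rw [Finset.card_insert_of_notMem (by simp [hxne]), Finset.card_singleton]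
    calc 2 = ({x, f x} : Finset V).card := hcard.symm
      _ ≤ Fintype.card V := by rw [← Finset.card_univ]; exact Finset.card_le_card (Finset.subset_univ _)
  omega

include hT hf hcov in
lemma reach [Fintype V] {a : V} (hab : f (f a) = a) (v : V) : ∃ k, f^[k] v = a := by
  obtain ⟨y, ⟨k, hk⟩, hy⟩ := exists_periodic hT hf v
  have := unique_two_cycle hT hf hcov hy hab
  rw [Sym2.eq_iff] at this
  rcases this with ⟨h1, _⟩ | ⟨h1, h2⟩
  · exact ⟨k, by rw [hk, h1]⟩
  · refine ⟨k + 1, ?_⟩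
    rw [Function.iterate_succ_apply', hk, h2]

include hT hf hcov in
/-- The main determination lemma: a covering out-function with a 2-cycle at `a`
is given by second vertices of paths to `a`. -/
lemma determined [Fintype V] {a : V} (hab : f (f a) = a) (v : V) :
    f v = if v = a then f a else treeSnd hT v a := by
  split_ifs with hva
  · rw [hva]
  · have hex : ∃ k, f^[k] v = a := reach hT hf hcov hab v
    classical
    obtain ⟨m, hm, hmin⟩ : ∃ m, f^[m] v = a ∧ ∀ q < m, f^[q] v ≠ a :=
      ⟨Nat.find hex, Nat.find_spec hex, fun q hq => Nat.find_min hex hq⟩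
    have hm1 : 1 ≤ m := by
      rcases Nat.eq_zero_or_pos m with h | h
      · exfalso; apply hva; rw [← hm, h]; rfl
      · exact h
    have hdist : ∀ i j, i < j → j ≤ m → f^[i] v ≠ f^[j] v := by
      intro i j hij hjm heq
      have : f^[m - j + i] v = a := by
        have h1 : f^[m - j] (f^[i] v) = f^[m - j] (f^[j] v) := by rw [heq]
        rw [← Function.iterate_add_apply, ← Function.iterate_add_apply] at h1
        have h2 : m - j + j = m := by omega
        rw [h2, hm] at h1
        exact h1
      exact hmin (m - j + i) (by omega) this
    let w : T.Walk v a := (iterWalk T f hf m v).copy rfl hm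
    have hwpath : w.IsPath := by
      rw [Walk.isPath_def]
      show ((iterWalk T f hf m v).copy rfl hm).support.Nodup
      rw [Walk.support_copy, iterWalk_support]
      refine List.Nodup.map_on ?_ List.nodup_range
      intro i hi j hj hij
      simp only [List.mem_range] at hi hj
      by_contra hne
      rcases Nat.lt_or_ge i j with h | h
      · exact hdist i j h (by omega) hij
      · exact hdist j i (by omega) (by omega) hij.symm
    have := getVert_one_eq_treeSnd hT w hwpath
    rw [← this]
    show f v = w.getVert 1
    obtain ⟨m', rfl⟩ : ∃ m', m = m' + 1 := ⟨m - 1, by omega⟩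
    show f v = ((iterWalk T f hf (m'+1) v).copy rfl hm).getVert 1
    rw [Walk.getVert_copy, iterWalk_getVert_one]

end Dyn

section Construct
variable (hT : T.IsTree)

/-- The out-function determined by an oriented edge `(a,b)` of the tree. -/
noncomputable def F2 (a b : V) : V → V := fun v => if v = a then b else treeSnd hT v a

lemma F2_apply_left {a b : V} : F2 hT a b a = b := if_pos rfl

lemma F2_apply {a b v : V} (h : v ≠ a) : F2 hT a b v = treeSnd hT v a := if_neg h

lemma F2_adj {a b : V} (hab : T.Adj a b) (v : V) : T.Adj v (F2 hT a b v) := by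
  by_cases h : v = a
  · rw [h, F2_apply_left]; exact hab
  · rw [F2_apply hT h]; exact treeSnd_adj hT h

lemma F2_apply_right {a b : V} (hab : T.Adj a b) : F2 hT a b b = a := by
  rw [F2_apply hT hab.ne', treeSnd_of_adj hT hab.symm]

lemma F2_fromRel {a b : V} (hab : T.Adj a b) :
    SimpleGraph.fromRel (fun x y => F2 hT a b x = y) = T := by
  ext x y
  rw [fromRel_adj]
  constructor
  · rintro ⟨hne, h | h⟩
    · rw [← h]; exact F2_adj hT hab x
    · rw [← h]; exact (F2_adj hT hab y).symm
  · intro h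
    refine ⟨h.ne, ?_⟩
    by_cases hx : x = a
    · subst hx
      by_cases hy : y = b
      · left; rw [F2_apply_left, hy]
      · right
        rw [F2_apply hT h.ne', treeSnd_of_adj hT h.symm]
    · by_cases hy : y = a
      · subst hy
        left
        rw [F2_apply hT hx, treeSnd_of_adj hT h]
      · rcases treeSnd_edge hT h (a := a) with h1 | h1
        · left; rw [F2_apply hT hx, h1]
        · right; rw [F2_apply hT hy, h1]

lemma F2_two_cycle {a b : V} (hab : T.Adj a b) : F2 hT a b (F2 hT a b a) = a := by
  rw [F2_apply_left, F2_apply_right hT hab]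

lemma F2_symm [Fintype V] {a b : V} (hab : T.Adj a b) : F2 hT a b = F2 hT b a := by
  have hf : ∀ v, T.Adj v (F2 hT a b v) := F2_adj hT hab
  have hcov : ∀ u w, T.Adj u w → F2 hT a b u = w ∨ F2 hT a b w = u := by
    intro u w huw
    have := (F2_fromRel hT hab).symm ▸ huw
    rw [fromRel_adj] at this
    exact this.2
  have h2 : F2 hT a b (F2 hT a b b) = b := by
    rw [F2_apply_right hT hab, F2_apply_left]
  funext v
  have := determined hT hf hcov h2 v
  rw [this, F2_apply_right hT hab]
  rfl

end Construct

section Key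
variable [Fintype V] (hT : T.IsTree)

/-- The lifted map from edges to out-functions. -/
noncomputable def FF : Sym2 V → (V → V) := by
  classical
  exact Sym2.lift ⟨fun a b => if h : T.Adj a b then F2 hT a b else id, by
    intro a b
    show (if _ : T.Adj a b then F2 hT a b else id) = (if _ : T.Adj b a then F2 hT b a else id)
    by_cases h : T.Adj a b
    · rw [dif_pos h, dif_pos h.symm, F2_symm hT h]
    · rw [dif_neg h, dif_neg (fun h' => h h'.symm)]⟩

lemma FF_of_adj {a b : V} (hab : T.Adj a b) : FF hT s(a, b) = F2 hT a b := by
  classical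
  rw [FF]
  simp only [Sym2.lift_mk]
  rw [dif_pos hab]

lemma cov_of_fromRel {f : V → V}
    (hrel : SimpleGraph.fromRel (fun x y => f x = y) = T) :
    ∀ u w, T.Adj u w → f u = w ∨ f w = u := by
  intro u w huw
  have := hrel.symm ▸ huw
  rw [fromRel_adj] at this
  exact this.2

lemma mem_iff_FF {f : V → V} (hf : ∀ v, T.Adj v (f v))
    (hrel : SimpleGraph.fromRel (fun x y => f x = y) = T) :
    ∃ e ∈ T.edgeSet, FF hT e = f := by
  have hcov := cov_of_fromRel hrel
  obtain ⟨v0⟩ := hT.isConnected.nonempty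
  obtain ⟨y, _, hy⟩ := exists_periodic hT hf v0
  refine ⟨s(y, f y), (hf y), ?_⟩
  rw [FF_of_adj hT (hf y)]
  funext v
  have hd := determined hT hf hcov hy v
  by_cases hv : v = y
  · rw [F2, hv]
    simp
  · rw [F2]
    simp only [hv, if_false]
    rw [hd, if_neg hv]

include hT in
lemma key_count :
    {f : V → V | (∀ v, T.Adj v (f v)) ∧
      SimpleGraph.fromRel (fun x y => f x = y) = T}.ncard = Fintype.card V - 1 := by
  classical
  have hset : {f : V → V | (∀ v, T.Adj v (f v)) ∧
      SimpleGraph.fromRel (fun x y => f x = y) = T} = FF hT '' T.edgeSet := by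
    apply Set.eq_of_subset_of_subset
    · rintro f ⟨hf, hrel⟩
      obtain ⟨e, he, hfe⟩ := mem_iff_FF hT hf hrel
      exact ⟨e, he, hfe⟩
    · rintro g ⟨e, he, rfl⟩
      induction e with
      | h a b =>
        rw [mem_edgeSet] at he
        rw [FF_of_adj hT he]
        exact ⟨F2_adj hT he, F2_fromRel hT he⟩
  have hinj : Set.InjOn (FF hT) T.edgeSet := by
    intro e1 he1 e2 he2 heq
    induction e1 with
    | h a b =>
      induction e2 with
      | h c d =>
        replace he1 : T.Adj a b := he1
        replace he2 : T.Adj c d := he2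
        rw [FF_of_adj hT he1, FF_of_adj hT he2] at heq
        have h1 : F2 hT a b (F2 hT a b a) = a := F2_two_cycle hT he1
        have h2 : F2 hT a b (F2 hT a b c) = c := by
          rw [heq]; exact F2_two_cycle hT he2
        have := unique_two_cycle hT (F2_adj hT he1) (cov_of_fromRel (F2_fromRel hT he1))
          h1 h2
        rw [F2_apply_left] at this
        have hcd : F2 hT a b c = d := by rw [heq, F2_apply_left]
        rw [hcd] at this
        exact this
  rw [hset, Set.ncard_image_of_injOn hinj]
  haveI : Fintype T.edgeSet := Set.Finite.fintype (Set.toFinite _)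
  rw [Set.ncard_eq_toFinset_card' T.edgeSet]
  have := hT.card_edgeFinset
  rw [edgeFinset] at this
  omega

end Key

section Main
variable {G : SimpleGraph V} [Fintype V]

lemma set_transfer {T : SimpleGraph V} (hTG : T ≤ G) :
    {f : V → V | (∀ v, G.Adj v (f v)) ∧ SimpleGraph.fromRel (fun x y => f x = y) = T}
    = {f : V → V | (∀ v, T.Adj v (f v)) ∧ SimpleGraph.fromRel (fun x y => f x = y) = T} := by
  ext f
  simp only [Set.mem_setOf_eq]
  constructor
  · rintro ⟨hf, hrel⟩
    refine ⟨?_, hrel⟩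
    intro v
    rw [← hrel, fromRel_adj]
    exact ⟨(hf v).ne, Or.inl rfl⟩
  · rintro ⟨hf, hrel⟩
    exact ⟨fun v => hTG (hf v), hrel⟩

lemma fromRel_le {f : V → V} (hf : ∀ v, G.Adj v (f v)) :
    SimpleGraph.fromRel (fun x y => f x = y) ≤ G := by
  intro x y hxy
  rw [fromRel_adj] at hxy
  rcases hxy.2 with h | h
  · rw [← h]; exact hf x
  · rw [← h]; exact (hf y).symm

lemma denom_count [DecidableRel G.Adj] :
    {f : V → V | ∀ v, G.Adj v (f v)}.ncard = ∏ v, G.degree v := by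
  rw [← Nat.card_coe_set_eq]
  have e : {f : V → V | ∀ v, G.Adj v (f v)} ≃ (∀ v, G.neighborSet v) :=
    { toFun := fun f v => ⟨f.1 v, f.2 v⟩
      invFun := fun g => ⟨fun v => (g v).1, fun v => (g v).2⟩
      left_inv := fun f => rfl
      right_inv := fun g => rfl }
  rw [Nat.card_congr e, Nat.card_eq_fintype_card, Fintype.card_pi]
  exact Finset.prod_congr rfl (fun v _ => G.card_neighborSet_eq_degree v)

lemma tree_count :
    {f : V → V | (∀ v, G.Adj v (f v)) ∧
        (SimpleGraph.fromRel (fun x y => f x = y)).IsTree}.ncard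
      = {H : SimpleGraph V | H ≤ G ∧ H.IsTree}.ncard * (Fintype.card V - 1) := by
  classical
  rw [Set.ncard_eq_toFinset_card', Set.toFinset_setOf]
  rw [Set.ncard_eq_toFinset_card', Set.toFinset_setOf]
  rw [Finset.card_eq_sum_card_fiberwise
    (f := fun f : V → V => SimpleGraph.fromRel (fun x y => f x = y))
    (t := Finset.univ.filter fun H : SimpleGraph V => H ≤ G ∧ H.IsTree)
    (fun f hf => by
      simp only [Finset.mem_coe, Finset.mem_filter, Finset.mem_univ, true_and] at hf ⊢
      exact ⟨fromRel_le hf.1, hf.2⟩)]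
  rw [Finset.sum_congr rfl (fun H hH => ?_), Finset.sum_const, smul_eq_mul]
  simp only [Finset.mem_filter, Finset.mem_univ, true_and] at hH
  have hfil : ((Finset.univ.filter fun f : V → V => (∀ v, G.Adj v (f v)) ∧
        (SimpleGraph.fromRel (fun x y => f x = y)).IsTree).filter
        fun f => SimpleGraph.fromRel (fun x y => f x = y) = H)
      = Finset.univ.filter fun f : V → V => (∀ v, H.Adj v (f v)) ∧
        SimpleGraph.fromRel (fun x y => f x = y) = H := by
    ext f
    simp only [Finset.mem_filter, Finset.mem_univ, true_and]
    constructor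
    · rintro ⟨⟨hf, _⟩, hrel⟩
      have hmem : f ∈ {f : V → V | (∀ v, G.Adj v (f v)) ∧
          SimpleGraph.fromRel (fun x y => f x = y) = H} := ⟨hf, hrel⟩
      rw [set_transfer hH.1] at hmem
      exact hmem
    · rintro ⟨hf, hrel⟩
      refine ⟨⟨fun v => hH.1 (hf v), ?_⟩, hrel⟩
      rw [hrel]
      exact hH.2
  rw [hfil]
  have := key_count (T := H) hH.2
  rw [Set.ncard_eq_toFinset_card', Set.toFinset_setOf] at this
  exact this

end Main
end OneOut



/- A *1-out-directed graph* in `G` is encoded by a function `f : V → V` with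
`G.Adj v (f v)` for every vertex `v` (the unique out-neighbour of `v` is `f v`).
Its underlying simple undirected graph `U(f)` is `SimpleGraph.fromRel (fun x y => f x = y)`.
A uniformly random 1-out-directed graph corresponds to a uniformly random such `f`,
so probabilities are ratios of counts of such functions. -/

/-- Let `G` be a connected graph with `n ≥ 2` vertices and `d(G) = ∏_v d_G(v)`, and let
`𝒟` be a uniformly random 1-out-directed graph in `G`. Then for every spanning tree `T`
of `G`, `ℙ(U(𝒟) = T) = (n-1)/d(G)`. In particular, conditioned on the event that
`U(𝒟)` is a tree, `U(𝒟)` is a uniformly random spanning tree of `G`. -/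
theorem uniform_one_out_directed_graph_gives_uniform_spanning_tree
    (V : Type) [Fintype V] [DecidableEq V] (G : SimpleGraph V) [DecidableRel G.Adj]
    (hn : 2 ≤ Fintype.card V) (hG : G.Connected) :
    (∀ T : SimpleGraph V, T ≤ G → T.IsTree →
      ({f : V → V | (∀ v : V, G.Adj v (f v)) ∧
            SimpleGraph.fromRel (fun x y => f x = y) = T}.ncard : ℝ) /
          ({f : V → V | ∀ v : V, G.Adj v (f v)}.ncard : ℝ) =
        ((Fintype.card V : ℝ) - 1) / (∏ v : V, (G.degree v : ℝ))) ∧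
    (∀ T : SimpleGraph V, T ≤ G → T.IsTree →
      ({f : V → V | (∀ v : V, G.Adj v (f v)) ∧
            SimpleGraph.fromRel (fun x y => f x = y) = T}.ncard : ℝ) /
          ({f : V → V | (∀ v : V, G.Adj v (f v)) ∧
            (SimpleGraph.fromRel (fun x y => f x = y)).IsTree}.ncard : ℝ) =
        1 / ({H : SimpleGraph V | H ≤ G ∧ H.IsTree}.ncard : ℝ)) := by
  constructor
  · intro T hTG hTtree
    have hnum : {f : V → V | (∀ v : V, G.Adj v (f v)) ∧
        SimpleGraph.fromRel (fun x y => f x = y) = T}.ncard = Fintype.card V - 1 := by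
      rw [OneOut.set_transfer hTG]
      exact OneOut.key_count hTtree
    rw [hnum, OneOut.denom_count]
    have h1 : 1 ≤ Fintype.card V := le_trans one_le_two hn
    push_cast [Nat.cast_sub h1]
    ring
  · intro T hTG hTtree
    have hnum : {f : V → V | (∀ v : V, G.Adj v (f v)) ∧
        SimpleGraph.fromRel (fun x y => f x = y) = T}.ncard = Fintype.card V - 1 := by
      rw [OneOut.set_transfer hTG]
      exact OneOut.key_count hTtree
    rw [hnum, OneOut.tree_count]
    have hN : 0 < {H : SimpleGraph V | H ≤ G ∧ H.IsTree}.ncard :=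
      (Set.ncard_pos (Set.toFinite _)).2 ⟨T, hTG, hTtree⟩
    have ha : ((Fintype.card V - 1 : ℕ) : ℝ) ≠ 0 := by
      rw [Nat.cast_ne_zero]
      exact Nat.sub_ne_zero_of_lt (lt_of_lt_of_le one_lt_two hn)
    rw [Nat.cast_mul, ← div_div, div_right_comm, div_self ha]
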